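/- Let a : ℕ → ℂ be an arbitrary sequence, let t, u ∈ ℂ, and let N ≥ 1 be an integer. Then the coefficient of q^N in the formal power series (over ℂ) ∑_{n=1}^{N} a(n) · ∑_{i=0}^{N} t·u · q^{n+i} · (∏_{j=1}^{n−1} (1 − (1−u)·t·q^{i+j})) · (∏_{j=1}^{n} (1 − t·q^{i+j}))⁻¹ equals ∑_{π ∈ P(N)} t^{k(π)} u^{Q(π)} ∑_{j=1}^{s(π)} a(l(π) − s(π) + j). (This is the coefficient-of-q^N form of Theorem 3 of the paper, ∑_{n≥1} a_n ∑_{i≥0} (tu((1−u)tq^{i+1})_{n−1}/(tq^{i+1})_n) q^{n+i} = ∑_{n≥1} q^n ∑_{π∈P(n)} t^{k(π)} u^{Q(π)} ∑_{j=1}^{s(π)} a_{l(π)−s(π)+j}; the omitted terms are divisible by q^{n+i} with n+i > N and hence do not affect the coefficient of q^N.) -/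

import Mathlib

open Finset PowerSeries

/-- `k(π)`: number of parts of the partition `π`, counted with multiplicity. -/
def kParts {n : ℕ} (π : n.Partition) : ℕ := Multiset.card π.parts

/-- `Q(π)`: number of distinct parts of the partition `π`. -/
def qParts {n : ℕ} (π : n.Partition) : ℕ := π.parts.toFinset.card

/-- `l(π)`: largest part of the partition `π` (`0` for the empty partition). -/
def lPart {n : ℕ} (π : n.Partition) : ℕ := π.parts.sup

/-- `s(π)`: smallest part of the partition `π` (`0` for the empty partition). -/
def sPart {n : ℕ} (π : n.Partition) : ℕ := WithTop.untopD 0 π.parts.toFinset.min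
open Finset PowerSeries

noncomputable section

/-- Series `∑_r w r X^{r m}`. -/
def Wser (m : ℕ) (w : ℕ → ℂ) : PowerSeries ℂ :=
  PowerSeries.mk fun k => if m ∣ k then w (k / m) else 0

lemma coeff_Wser (m : ℕ) (w : ℕ → ℂ) (k : ℕ) :
    PowerSeries.coeff (R := ℂ) k (Wser m w) = if m ∣ k then w (k / m) else 0 :=
  coeff_mk _ _

lemma Wser_mul_one_sub (m : ℕ) (hm : 0 < m) (c : ℂ) (w : ℕ → ℂ) :
    Wser m w * (1 - PowerSeries.C (R := ℂ) c * X ^ m) =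
      Wser m (fun r => w r - if r = 0 then 0 else c * w (r - 1)) := by
  ext k
  rw [mul_sub, mul_one, map_sub, coeff_Wser, coeff_Wser]
  rw [show Wser m w * (PowerSeries.C (R := ℂ) c * X ^ m) = PowerSeries.C (R := ℂ) c * (Wser m w * X ^ m) by ring]
  rw [coeff_C_mul, coeff_mul_X_pow', ]
  by_cases hd : m ∣ k
  · rw [if_pos hd, if_pos hd]
    rcases hd with ⟨r, rfl⟩
    rcases Nat.eq_zero_or_pos r with rfl | hr
    · have h0 : ¬ m ≤ m * 0 := by omega
      rw [if_neg h0, mul_zero]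
      simp
    · have hle : m ≤ m * r := Nat.le_mul_of_pos_right m hr
      rw [if_pos hle, coeff_Wser, Nat.mul_div_cancel_left _ hm]
      rw [if_neg hr.ne']
      have h1 : m * r - m = m * (r - 1) := by
        rw [Nat.mul_sub, mul_one]
      rw [h1, if_pos (Dvd.intro _ rfl)]
      rw [Nat.mul_div_cancel_left _ hm]
  · rw [if_neg hd, if_neg hd]
    by_cases hle : m ≤ k
    · rw [if_pos hle, coeff_Wser, if_neg, mul_zero, sub_zero]
      intro h
      have h2 : k - m + m = k := by omega
      exact hd (h2 ▸ Nat.dvd_add h (dvd_refl m))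
    · rw [if_neg hle, mul_zero, sub_zero]

end
noncomputable section
open Finset PowerSeries

lemma one_sub_eq_Wser (m : ℕ) (hm : 0 < m) (c : ℂ) :
    1 - PowerSeries.C (R := ℂ) c * X ^ m =
      Wser m (fun r => if r = 0 then 1 else if r = 1 then -c else 0) := by
  ext k
  rw [map_sub, coeff_C_mul, coeff_one, coeff_X_pow, coeff_Wser]
  by_cases h0 : k = 0
  · subst h0
    rw [if_pos rfl, if_pos (dvd_zero m), Nat.zero_div, if_pos rfl,
      if_neg (by omega : ¬ (0 = m)), mul_zero, sub_zero]
  · rw [if_neg h0]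
    by_cases hk : k = m
    · subst hk
      simp [Nat.div_self hm]
    · rw [if_neg hk, mul_zero, sub_zero]
      by_cases hd : m ∣ k
      · rw [if_pos hd]
        have h1 : k / m ≠ 0 := by
          rcases hd with ⟨r, rfl⟩; rw [Nat.mul_div_cancel_left _ hm]; rintro rfl; omega
        have h2 : k / m ≠ 1 := by
          rintro h; exact hk (by rw [← Nat.div_mul_cancel hd, h, one_mul])
        rw [if_neg h1, if_neg h2]
      · rw [if_neg hd]

lemma C_mul_X_pow_eq_Wser (m : ℕ) (hm : 0 < m) (c : ℂ) :
    PowerSeries.C (R := ℂ) c * X ^ m = Wser m (fun r => if r = 1 then c else 0) := by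
  ext k
  rw [coeff_C_mul, coeff_X_pow, coeff_Wser]
  by_cases hk : k = m
  · subst hk
    simp [Nat.div_self hm]
  · rw [if_neg hk, mul_zero]
    by_cases hd : m ∣ k
    · rw [if_pos hd, if_neg, eq_comm]
      rintro h; exact hk (by rw [← Nat.div_mul_cancel hd, h, one_mul])
    · rw [if_neg hd]

end
noncomputable section
open Finset PowerSeries

/-- weight for non-maximal parts -/
def w1 (u t : ℂ) : ℕ → ℂ := fun r => if r = 0 then 1 else u * t ^ r
/-- weight for the maximal part -/
def w2 (u t : ℂ) : ℕ → ℂ := fun r => if r = 0 then 0 else u * t ^ r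

lemma f1 (m : ℕ) (hm : 0 < m) (u t : ℂ) :
    Wser m (w1 u t) * (1 - PowerSeries.C (R := ℂ) t * X ^ m) =
      1 - PowerSeries.C (R := ℂ) ((1 - u) * t) * X ^ m := by
  rw [Wser_mul_one_sub m hm, one_sub_eq_Wser m hm]
  refine congrArg (Wser m) (funext fun r => ?_)
  match r with
  | 0 => simp [w1]
  | 1 => simp [w1]; ring
  | (r + 2) => simp [w1, pow_succ]; ring

lemma f2 (m : ℕ) (hm : 0 < m) (u t : ℂ) :
    Wser m (w2 u t) * (1 - PowerSeries.C (R := ℂ) t * X ^ m) =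
      PowerSeries.C (R := ℂ) (t * u) * X ^ m := by
  rw [Wser_mul_one_sub m hm, C_mul_X_pow_eq_Wser m hm]
  refine congrArg (Wser m) (funext fun r => ?_)
  match r with
  | 0 => simp [w2]
  | 1 => simp [w2]; ring
  | (r + 2) => simp [w2, pow_succ]; ring

lemma term_eq (u t : ℂ) (n i : ℕ) (hn : 1 ≤ n) :
    PowerSeries.C (R := ℂ) (t * u) * (X : PowerSeries ℂ) ^ (n + i) *
        (∏ j ∈ Finset.Icc 1 (n - 1),
          (1 - PowerSeries.C (R := ℂ) ((1 - u) * t) * (X : PowerSeries ℂ) ^ (i + j))) *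
        (∏ j ∈ Finset.Icc 1 n, (1 - PowerSeries.C (R := ℂ) t * (X : PowerSeries ℂ) ^ (i + j)))⁻¹ =
      ∏ j ∈ Finset.Icc 1 n, Wser (i + j) (if j = n then w2 u t else w1 u t) := by
  set B := ∏ j ∈ Finset.Icc 1 n, (1 - PowerSeries.C (R := ℂ) t * (X : PowerSeries ℂ) ^ (i + j)) with hB
  have hBc : constantCoeff (R := ℂ) B ≠ 0 := by
    rw [hB, map_prod]
    rw [Finset.prod_eq_one]
    · exact one_ne_zero
    · intro j hj
      have : 0 < i + j := by simp at hj; omega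
      simp [zero_pow this.ne']
  have key : (∏ j ∈ Finset.Icc 1 n, Wser (i + j) (if j = n then w2 u t else w1 u t)) * B =
      PowerSeries.C (R := ℂ) (t * u) * (X : PowerSeries ℂ) ^ (n + i) *
        ∏ j ∈ Finset.Icc 1 (n - 1),
          (1 - PowerSeries.C (R := ℂ) ((1 - u) * t) * (X : PowerSeries ℂ) ^ (i + j)) := by
    rw [hB, ← Finset.prod_mul_distrib]
    have hmem : n ∈ Finset.Icc 1 n := by simp [hn]
    rw [Finset.prod_eq_prod_diff_singleton_mul hmem]
    have hdiff : Finset.Icc 1 n \ {n} = Finset.Icc 1 (n - 1) := by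
      ext x; simp; omega
    rw [hdiff, if_pos rfl, f2 _ (by omega) u t]
    rw [Finset.prod_congr rfl (fun j hj => ?_), mul_comm, show i + n = n + i by ring,
      mul_assoc]
    have hj' : j ≠ n := by simp at hj; omega
    rw [if_neg hj', f1 _ (by simp at hj; omega) u t]
  calc PowerSeries.C (R := ℂ) (t * u) * (X : PowerSeries ℂ) ^ (n + i) *
        (∏ j ∈ Finset.Icc 1 (n - 1),
          (1 - PowerSeries.C (R := ℂ) ((1 - u) * t) * (X : PowerSeries ℂ) ^ (i + j))) * B⁻¹
      = ((∏ j ∈ Finset.Icc 1 n, Wser (i + j) (if j = n then w2 u t else w1 u t)) * B) * B⁻¹ := by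
        rw [key]
    _ = _ := by rw [mul_assoc, PowerSeries.mul_inv_cancel B hBc, mul_one]

end
noncomputable section
open Finset PowerSeries
open scoped Classical

lemma coeff_prod_Wser (N : ℕ) (s : Finset ℕ) (hs : ∀ i ∈ s, 0 < i) (w : ℕ → ℕ → ℂ) :
    PowerSeries.coeff (R := ℂ) N (∏ i ∈ s, Wser i (w i)) =
      ∑ p ∈ Finset.univ.filter (fun p : N.Partition => ∀ j ∈ p.parts, j ∈ s),
        ∏ i ∈ s, w i (p.parts.count i) := by
  rw [PowerSeries.coeff_prod]
  simp_rw [coeff_Wser]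
  rw [Finset.sum_congr rfl (fun f _ => Finset.prod_ite_zero)]
  rw [Finset.sum_ite, Finset.sum_const_zero, add_zero]
  symm
  set φ : (p : N.Partition) →
      p ∈ Finset.univ.filter (fun p : N.Partition => ∀ j ∈ p.parts, j ∈ s) → (ℕ →₀ ℕ) :=
    fun p _ => {
      toFun := fun i => Multiset.count i p.parts • i
      support := Finset.filter (fun i => i ≠ 0) p.parts.toFinset
      mem_support_toFun := fun a => by
        simp only [smul_eq_mul, ne_eq, mul_eq_zero, Multiset.count_eq_zero]
        rw [not_or, not_not]
        simp only [Multiset.mem_toFinset, not_not, mem_filter] }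
  refine Finset.sum_bij φ ?_ ?_ ?_ ?_
  · intro p hp
    simp only [mem_filter, mem_univ, true_and] at hp
    simp only [φ, mem_filter, mem_finsuppAntidiag]
    dsimp only [ne_eq, smul_eq_mul, Finsupp.coe_mk]
    refine ⟨⟨?_, fun i hi => ?_⟩, fun i _ => dvd_mul_left i _⟩
    · conv_rhs => rw [← p.parts_sum]
      rw [sum_multiset_count_of_subset _ s]
      · simp only [smul_eq_mul]
      · intro i
        simp only [Multiset.mem_toFinset]
        exact hp i
    · simp only [ne_eq, Multiset.mem_toFinset, mem_filter, and_imp] at hi ⊢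
      exact hp i hi.1
  · intro p₁ hp₁ p₂ hp₂ h
    apply Nat.Partition.ext
    simp only [mem_filter, mem_univ, true_and] at hp₁ hp₂
    ext i
    simp only [φ, ne_eq, Multiset.mem_toFinset, not_not, smul_eq_mul, Finsupp.mk.injEq] at h
    by_cases hi : i = 0
    · rw [hi]
      rw [Multiset.count_eq_zero_of_notMem]
      · rw [Multiset.count_eq_zero_of_notMem]
        intro a; exact Nat.lt_irrefl 0 (hs 0 (hp₂ 0 a))
      intro a; exact Nat.lt_irrefl 0 (hs 0 (hp₁ 0 a))
    · rw [← mul_left_inj' hi]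
      rw [funext_iff] at h
      exact h.2 i
  · simp only [φ, mem_filter, mem_finsuppAntidiag, mem_univ, true_and, and_assoc]
    rintro f ⟨hf₁, hf₂, hf₄⟩
    refine ⟨⟨∑ i ∈ s, Multiset.replicate (f i / i) i, ?_, ?_⟩, ?_, ?_⟩
    · intro i hi
      simp only [exists_prop, Multiset.mem_sum, mem_map, Function.Embedding.coeFn_mk] at hi
      rcases hi with ⟨t, ht, z⟩
      apply hs
      rwa [Multiset.eq_of_mem_replicate z]
    · simp_rw [Multiset.sum_sum, Multiset.sum_replicate, Nat.nsmul_eq_mul]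
      rw [← hf₁]
      exact sum_congr rfl fun i hi => Nat.div_mul_cancel (hf₄ i hi)
    · intro j hj
      rw [Multiset.mem_sum] at hj
      rcases hj with ⟨i, hi₁, hi₂⟩
      rwa [Multiset.eq_of_mem_replicate hi₂]
    · ext i
      simp_rw [Multiset.count_sum', Multiset.count_replicate, sum_ite_eq']
      simp only [ne_eq, Multiset.mem_toFinset, not_not, smul_eq_mul, ite_mul,
        zero_mul, Finsupp.coe_mk]
      split_ifs with h
      · exact Nat.div_mul_cancel (hf₄ i h)
      · apply symm
        rw [← Finsupp.notMem_support_iff]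
        exact notMem_mono hf₂ h
  · intro p hp
    simp only [mem_filter, mem_univ, true_and] at hp
    refine Finset.prod_congr rfl fun i hi => ?_
    simp only [φ, smul_eq_mul, Finsupp.coe_mk]
    rw [Nat.mul_div_cancel _ (hs i hi)]

end
open Finset PowerSeries


section facts
variable {N : ℕ}

lemma toFinset_nonempty' (p : N.Partition) (hN : 1 ≤ N) : p.parts.toFinset.Nonempty := by
  rw [Multiset.toFinset_nonempty]
  intro h
  have := p.parts_sum
  rw [h] at this
  simp at this
  omega

lemma sPart_mem (p : N.Partition) (hN : 1 ≤ N) : sPart p ∈ p.parts := by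
  obtain ⟨m, hm⟩ := Finset.min_of_nonempty (toFinset_nonempty' p hN)
  have : sPart p = m := by rw [sPart, hm]; rfl
  rw [this, ← Multiset.mem_toFinset]
  exact Finset.mem_of_min hm

lemma sPart_le (p : N.Partition) (hN : 1 ≤ N) {j : ℕ} (hj : j ∈ p.parts) : sPart p ≤ j := by
  obtain ⟨m, hm⟩ := Finset.min_of_nonempty (toFinset_nonempty' p hN)
  have h1 : sPart p = m := by rw [sPart, hm]; rfl
  rw [h1]
  have := Finset.min_le (Multiset.mem_toFinset.mpr hj)
  rw [hm] at this
  exact_mod_cast this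

lemma lPart_eq_sup_toFinset (p : N.Partition) : lPart p = p.parts.toFinset.sup id := by
  rw [lPart, Finset.sup_def, Multiset.map_id, Multiset.toFinset_val, Multiset.sup_dedup]

lemma lPart_mem (p : N.Partition) (hN : 1 ≤ N) : lPart p ∈ p.parts := by
  rw [← Multiset.mem_toFinset, lPart_eq_sup_toFinset,
    ← Finset.sup'_eq_sup (toFinset_nonempty' p hN) id, ← Finset.max'_eq_sup']
  exact Finset.max'_mem _ _

lemma le_lPart (p : N.Partition) {j : ℕ} (hj : j ∈ p.parts) : j ≤ lPart p := Multiset.le_sup hj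

lemma lPart_le (p : N.Partition) (hN : 1 ≤ N) : lPart p ≤ N := by
  conv_rhs => rw [← p.parts_sum]
  exact Multiset.single_le_sum (fun x _ => Nat.zero_le x) _ (lPart_mem p hN)

lemma one_le_sPart (p : N.Partition) (hN : 1 ≤ N) : 1 ≤ sPart p := p.parts_pos (sPart_mem p hN)

lemma sPart_le_lPart (p : N.Partition) (hN : 1 ≤ N) : sPart p ≤ lPart p := le_lPart p (sPart_mem p hN)

end facts
section eval
open Finset
variable {N : ℕ}


lemma cond_iff (p : N.Partition) (hN : 1 ≤ N) (n i : ℕ) (hn : 1 ≤ n) :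
    ((∀ j ∈ p.parts, j ∈ Finset.Icc (i + 1) (i + n)) ∧ (i + n) ∈ p.parts) ↔
      (lPart p = n + i ∧ i + 1 ≤ sPart p) := by
  constructor
  · rintro ⟨hsub, hmem⟩
    have h1 := le_lPart p hmem
    have h2 := hsub _ (lPart_mem p hN)
    have h3 := hsub _ (sPart_mem p hN)
    simp only [Finset.mem_Icc] at h2 h3
    exact ⟨by omega, by omega⟩
  · rintro ⟨hl, hsp⟩
    have hmem : i + n ∈ p.parts := by
      rw [show i + n = lPart p by omega]; exact lPart_mem p hN
    refine ⟨fun j hj => ?_, hmem⟩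
    have h1 := sPart_le p hN hj
    have h2 := le_lPart p hj
    simp only [Finset.mem_Icc]
    omega

lemma prod_w (u t : ℂ) (p : N.Partition) (n i : ℕ)
    (hsub : ∀ j ∈ p.parts, j ∈ Finset.Icc (i + 1) (i + n)) (hn : 1 ≤ n) :
    (∏ m ∈ Finset.Icc (i + 1) (i + n),
        (if m = i + n then w2 u t else w1 u t) (Multiset.count m p.parts)) =
      if (i + n) ∈ p.parts then t ^ kParts p * u ^ qParts p else 0 := by
  by_cases hmem : (i + n) ∈ p.parts
  · rw [if_pos hmem]
    have step1 : ∀ m ∈ Finset.Icc (i + 1) (i + n),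
        (if m = i + n then w2 u t else w1 u t) (Multiset.count m p.parts) =
          if Multiset.count m p.parts = 0 then 1 else u * t ^ (Multiset.count m p.parts) := by
      intro m hm
      by_cases h : m = i + n
      · subst h
        have hc : Multiset.count (i + n) p.parts ≠ 0 := Multiset.count_ne_zero.mpr hmem
        rw [if_pos rfl, w2, if_neg hc, if_neg hc]
      · rw [if_neg h]; rfl
    rw [Finset.prod_congr rfl step1]
    rw [← Finset.prod_subset (fun x hx => hsub x (Multiset.mem_toFinset.mp hx))
      (fun x _ hx => by rw [if_pos (Multiset.count_eq_zero_of_notMem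
        (fun h => hx (Multiset.mem_toFinset.mpr h)))])]
    rw [Finset.prod_congr rfl (fun m hm => if_neg (Multiset.count_ne_zero.mpr
      (Multiset.mem_toFinset.mp hm)))]
    rw [Finset.prod_mul_distrib, Finset.prod_const, Finset.prod_pow_eq_pow_sum,
      Multiset.toFinset_sum_count_eq]
    rw [kParts, qParts, mul_comm]
  · rw [if_neg hmem]
    apply Finset.prod_eq_zero (Finset.mem_Icc.mpr ⟨by omega, le_refl _⟩)
    rw [if_pos rfl, Multiset.count_eq_zero_of_notMem hmem, w2, if_pos rfl]

end eval
section assembleTest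
open Finset PowerSeries

lemma aux_inner_sum (a : ℕ → ℂ) (N : ℕ) (l sp : ℕ) (h1 : 1 ≤ sp) (h2 : sp ≤ l) (h3 : l ≤ N) :
    (∑ n ∈ Finset.Icc 1 N, ∑ i ∈ Finset.range (N + 1),
        if (l = n + i ∧ i + 1 ≤ sp) then a n else 0) =
      ∑ j ∈ Finset.Icc 1 sp, a (l - sp + j) := by
  have hstep : ∀ n ∈ Finset.Icc 1 N,
      (∑ i ∈ Finset.range (N + 1), if (l = n + i ∧ i + 1 ≤ sp) then a n else 0) =
        if (n ≤ l ∧ l + 1 ≤ n + sp) then a n else 0 := by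
    intro n hn
    simp only [Finset.mem_Icc] at hn
    by_cases hcase : n ≤ l ∧ l + 1 ≤ n + sp
    · rw [if_pos hcase]
      rw [Finset.sum_eq_single (l - n)]
      · rw [if_pos ⟨by omega, by omega⟩]
      · intro i _ hne
        rw [if_neg]; rintro ⟨e1, e2⟩; omega
      · intro h; exact absurd (Finset.mem_range.mpr (by omega)) h
    · rw [if_neg hcase]
      apply Finset.sum_eq_zero
      intro i _
      rw [if_neg]; rintro ⟨e1, e2⟩; omega
  rw [Finset.sum_congr rfl hstep, ← Finset.sum_filter]
  have hset : Finset.filter (fun n => n ≤ l ∧ l + 1 ≤ n + sp) (Finset.Icc 1 N) =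
      Finset.Icc (l - sp + 1) l := by
    ext x; simp only [Finset.mem_filter, Finset.mem_Icc]; omega
  rw [hset]
  refine Finset.sum_nbij' (fun n => n - (l - sp)) (fun j => l - sp + j) ?_ ?_ ?_ ?_ ?_
  · intro x hx; simp only [Finset.mem_Icc] at hx ⊢; omega
  · intro x hx; simp only [Finset.mem_Icc] at hx ⊢; omega
  · intro x hx; simp only [Finset.mem_Icc] at hx; omega
  · intro x hx; simp only [Finset.mem_Icc] at hx; omega
  · intro x hx; simp only [Finset.mem_Icc] at hx
    congr 1; omega

end assembleTest

noncomputable section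
open Finset PowerSeries
open scoped Classical

lemma coeff_term (u t : ℂ) (N n i : ℕ) (hN : 1 ≤ N) (hn : 1 ≤ n) :
    PowerSeries.coeff (R := ℂ) N
      (PowerSeries.C (R := ℂ) (t * u) * (PowerSeries.X : PowerSeries ℂ) ^ (n + i) *
        (∏ j ∈ Finset.Icc 1 (n - 1),
          (1 - PowerSeries.C (R := ℂ) ((1 - u) * t) * (PowerSeries.X : PowerSeries ℂ) ^ (i + j))) *
        (∏ j ∈ Finset.Icc 1 n,
          (1 - PowerSeries.C (R := ℂ) t * (PowerSeries.X : PowerSeries ℂ) ^ (i + j)))⁻¹) =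
    ∑ p : N.Partition, if (lPart p = n + i ∧ i + 1 ≤ sPart p)
      then t ^ kParts p * u ^ qParts p else 0 := by
  rw [term_eq u t n i hn]
  have hre : (∏ j ∈ Finset.Icc 1 n, Wser (i + j) (if j = n then w2 u t else w1 u t)) =
      ∏ m ∈ Finset.Icc (i + 1) (i + n), Wser m (if m = i + n then w2 u t else w1 u t) := by
    rw [← Finset.map_add_left_Icc, Finset.prod_map]
    refine Finset.prod_congr rfl fun j hj => ?_
    simp only [addLeftEmbedding_apply]
    exact congrArg _ (if_congr ⟨fun h => by omega, fun h => by omega⟩ rfl rfl).symm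
  rw [hre, coeff_prod_Wser N _ (fun m hm => by simp only [Finset.mem_Icc] at hm; omega) _]
  rw [Finset.sum_filter]
  refine Finset.sum_congr rfl fun p _ => ?_
  by_cases hc : ∀ j ∈ p.parts, j ∈ Finset.Icc (i + 1) (i + n)
  · rw [if_pos hc, prod_w u t p n i hc hn]
    by_cases hm : (i + n) ∈ p.parts
    · rw [if_pos hm, if_pos ((cond_iff p hN n i hn).mp ⟨hc, hm⟩)]
    · rw [if_neg hm, if_neg (fun h => hm ((cond_iff p hN n i hn).mpr h).2)]
  · rw [if_neg hc, if_neg (fun h => hc ((cond_iff p hN n i hn).mpr h).1)]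

end

/-- Theorem 3 (coefficient-of-`q^N` form): the weighted partition generating function
for the sum `∑_{j=1}^{s(π)} a(l(π) - s(π) + j)`. -/
theorem theorem3_coeff (a : ℕ → ℂ) (t u : ℂ) (N : ℕ) (hN : 1 ≤ N) :
    PowerSeries.coeff (R := ℂ) N
      (∑ n ∈ Finset.Icc 1 N, PowerSeries.C (R := ℂ) (a n) *
        ∑ i ∈ Finset.range (N + 1),
          PowerSeries.C (R := ℂ) (t * u) * (PowerSeries.X : PowerSeries ℂ) ^ (n + i) *
            (∏ j ∈ Finset.Icc 1 (n - 1),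
              (1 - PowerSeries.C (R := ℂ) ((1 - u) * t) * (PowerSeries.X : PowerSeries ℂ) ^ (i + j))) *
            (∏ j ∈ Finset.Icc 1 n,
              (1 - PowerSeries.C (R := ℂ) t * (PowerSeries.X : PowerSeries ℂ) ^ (i + j)))⁻¹) =
    ∑ π : N.Partition, t ^ kParts π * u ^ qParts π *
      ∑ j ∈ Finset.Icc 1 (sPart π), a (lPart π - sPart π + j) := by
  classical
  rw [map_sum]
  have step1 : ∀ n ∈ Finset.Icc 1 N,
      PowerSeries.coeff (R := ℂ) N (PowerSeries.C (R := ℂ) (a n) *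
        ∑ i ∈ Finset.range (N + 1),
          PowerSeries.C (R := ℂ) (t * u) * (PowerSeries.X : PowerSeries ℂ) ^ (n + i) *
            (∏ j ∈ Finset.Icc 1 (n - 1),
              (1 - PowerSeries.C (R := ℂ) ((1 - u) * t) * (PowerSeries.X : PowerSeries ℂ) ^ (i + j))) *
            (∏ j ∈ Finset.Icc 1 n,
              (1 - PowerSeries.C (R := ℂ) t * (PowerSeries.X : PowerSeries ℂ) ^ (i + j)))⁻¹) =
      ∑ i ∈ Finset.range (N + 1), ∑ p : N.Partition,
        (if (lPart p = n + i ∧ i + 1 ≤ sPart p) then a n else 0) *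
          (t ^ kParts p * u ^ qParts p) := by
    intro n hn
    simp only [Finset.mem_Icc] at hn
    rw [PowerSeries.coeff_C_mul, map_sum, Finset.mul_sum]
    refine Finset.sum_congr rfl fun i _ => ?_
    rw [coeff_term u t N n i hN hn.1, Finset.mul_sum]
    refine Finset.sum_congr rfl fun p _ => ?_
    split_ifs <;> ring
  rw [Finset.sum_congr rfl step1]
  rw [Finset.sum_comm]
  rw [Finset.sum_congr rfl (fun i _ => Finset.sum_comm)]
  rw [Finset.sum_comm]
  refine Finset.sum_congr rfl fun p _ => ?_
  have h1 := one_le_sPart p hN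
  have h2 := sPart_le_lPart p hN
  have h3 := lPart_le p hN
  rw [show (∑ i ∈ Finset.range (N + 1), ∑ n ∈ Finset.Icc 1 N,
      (if (lPart p = n + i ∧ i + 1 ≤ sPart p) then a n else 0) * (t ^ kParts p * u ^ qParts p)) =
    (∑ n ∈ Finset.Icc 1 N, ∑ i ∈ Finset.range (N + 1),
      (if (lPart p = n + i ∧ i + 1 ≤ sPart p) then a n else 0)) * (t ^ kParts p * u ^ qParts p) by
      rw [Finset.sum_comm, Finset.sum_mul]
      exact Finset.sum_congr rfl fun n _ => by rw [Finset.sum_mul]]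
  rw [aux_inner_sum a N (lPart p) (sPart p) h1 h2 h3]
  ring
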